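/- Let q ≥ 3 be an integer and define g(0)=0, g(1)=1, and g(n+1) = g(n) + g(⌈(n+1)/q⌉) for n ≥ 1. Define h by h(k)=k for 1 ≤ k ≤ q, h(n+1)=h(n)+1 if q ∤ n, and h(n+1)=h(n)(1 − 1/h(n/q + 1)) + 1 if q | n. Then h(n) ≥ ⌊log n / log q⌋ for all n ≥ 1. -/

import Mathlib

open Filter Real

theorem stmt16 (q : ℕ) (hq : 3 ≤ q) (h : ℕ → ℝ)
    (hh1 : ∀ k : ℕ, 1 ≤ k → k ≤ q → h k = k)
    (hh2 : ∀ n : ℕ, q ≤ n → ¬ q ∣ n → h (n + 1) = h n + 1)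
    (hh3 : ∀ n : ℕ, q ≤ n → q ∣ n → h (n + 1) = h n * (1 - 1 / h (n / q + 1)) + 1) :
    ∀ n : ℕ, 1 ≤ n → (⌊Real.log n / Real.log q⌋ : ℝ) ≤ h n := by
  have hq1 : 1 < q := by omega
  -- Main claim: h n ≥ Nat.log q n + 1.
  have main : ∀ n : ℕ, 1 ≤ n → (Nat.log q n : ℝ) + 1 ≤ h n := by
    intro n
    induction n using Nat.strong_induction_on with
    | _ n IH =>
      intro hn1
      by_cases hnq : n ≤ q
      · -- base region
        rw [hh1 n hn1 hnq]
        have hlt : Nat.log q n < n := Nat.log_lt_self q (by omega)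
        have : (Nat.log q n : ℝ) + 1 ≤ (n : ℝ) := by exact_mod_cast hlt
        linarith
      · push_neg at hnq
        obtain ⟨p, rfl⟩ : ∃ p, n = p + 1 := ⟨n - 1, by omega⟩
        have hpq : q ≤ p := by omega
        have hp1 : 1 ≤ p := by omega
        have hlogsucc : Nat.log q (p + 1) ≤ Nat.log q p + 1 := by
          calc Nat.log q (p + 1) ≤ Nat.log q (p * q) :=
                Nat.log_mono_right (by nlinarith)
            _ = Nat.log q p + 1 := Nat.log_mul_base hq1 (by omega)
        by_cases hdvd : q ∣ p
        · -- division step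
          obtain ⟨k, rfl⟩ := hdvd
          have hk1 : 1 ≤ k := by
            rcases Nat.eq_zero_or_pos k with rfl | hk
            · simp at hpq; omega
            · exact hk
          set L := Nat.log q (q * k) with hL
          have hLk : L = Nat.log q k + 1 := by
            rw [hL, mul_comm, Nat.log_mul_base hq1 (by omega)]
          have hL1 : 1 ≤ L := by omega
          -- log (q*k+1) ≤ L
          have hlogn : Nat.log q (q * k + 1) ≤ L := by
            by_contra hc
            push_neg at hc
            have h1 : q ^ (L + 1) ≤ q * k + 1 :=
              (Nat.le_log_iff_pow_le hq1 (by omega)).mp hc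
            have h2 : q * k < q ^ (L + 1) := Nat.lt_pow_succ_log_self hq1 _
            have h3 : q * k + 1 = q ^ (L + 1) := by omega
            have h4 : q ∣ q ^ (L + 1) := dvd_pow_self q (by omega)
            rw [← h3] at h4
            have : q ∣ 1 := (Nat.dvd_add_right ⟨k, rfl⟩).mp h4
            have := Nat.le_of_dvd one_pos this
            omega
          -- lower bound on h (q*k)
          have hA : (L : ℝ) + (q : ℝ) - 1 ≤ h (q * k) := by
            rcases eq_or_lt_of_le hk1 with rfl | hk2
            · rw [mul_one] at *
              rw [hh1 q (by omega) le_rfl]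
              have : L = 1 := by
                rw [hLk, Nat.log_one_right]
              rw [this]
              push_cast
              linarith
            · -- k ≥ 2, write k = k' + 1
              obtain ⟨k', rfl⟩ : ∃ k', k = k' + 1 := ⟨k - 1, by omega⟩
              have hk'1 : 1 ≤ k' := by omega
              have hqk' : q ≤ q * k' := Nat.le_mul_of_pos_right q (by omega)
              -- chain of q-1 unit steps
              have step : ∀ j, j ≤ q - 1 →
                  h (q * k' + 1 + j) = h (q * k' + 1) + j := by
                intro j
                induction j with
                | zero => simp
                | succ j ihj =>
                  intro hj
                  have hj' : j ≤ q - 1 := by omega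
                  have e1 : q * k' + 1 + (j + 1) = (q * k' + 1 + j) + 1 := by ring
                  have hge : q ≤ q * k' + 1 + j := by omega
                  have hnd : ¬ q ∣ q * k' + 1 + j := by
                    intro hd
                    have : q ∣ 1 + j := by
                      have := (Nat.dvd_add_right (Dvd.intro k' rfl)).mp
                        (by rwa [show q * k' + 1 + j = q * k' + (1 + j) by ring] at hd)
                      exact this
                    have := Nat.le_of_dvd (by omega) this
                    omega
                  rw [e1, hh2 _ hge hnd, ihj hj']
                  push_cast
                  ring
              have sfin := step (q - 1) le_rfl
              have efin : q * k' + 1 + (q - 1) = q * (k' + 1) := by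
                have : q * (k' + 1) = q * k' + q := by ring
                omega
              rw [efin] at sfin
              -- IH at q * k' + 1
              have hlt : q * k' + 1 < q * (k' + 1) + 1 := by
                have : q * (k' + 1) = q * k' + q := by ring
                omega
              have hih := IH (q * k' + 1) hlt (by omega)
              have hlog' : Nat.log q (k' + 1) ≤ Nat.log q (q * k' + 1) := by
                apply Nat.log_mono_right
                nlinarith
              have hLle : (L : ℝ) - 1 ≤ (Nat.log q (q * k' + 1) : ℝ) := by
                have hnat : L - 1 ≤ Nat.log q (q * k' + 1) := by
                  rw [hLk]; omega
                have h1 : ((L - 1 : ℕ) : ℝ) ≤ (Nat.log q (q * k' + 1) : ℝ) := by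
                  exact_mod_cast hnat
                rwa [Nat.cast_sub hL1, Nat.cast_one] at h1
              rw [sfin, Nat.cast_sub (by omega : 1 ≤ q), Nat.cast_one]
              have hq1R : (1:ℝ) ≤ (q:ℝ) - 1 := by
                have : (3:ℝ) ≤ q := by exact_mod_cast hq
                linarith
              push_cast
              push_cast at hih hLle
              linarith
          -- lower bound on h (k + 1)
          have hkn : k + 1 < q * k + 1 := by nlinarith
          have hB2 : (2 : ℝ) ≤ h (k + 1) := by
            by_cases hkq : k + 1 ≤ q
            · rw [hh1 (k + 1) (by omega) hkq]
              exact_mod_cast (by omega : 2 ≤ k + 1)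
            · have hih := IH (k + 1) hkn (by omega)
              have : 1 ≤ Nat.log q (k + 1) := Nat.log_pos hq1 (by omega)
              have : (1 : ℝ) ≤ (Nat.log q (k + 1) : ℝ) := by exact_mod_cast this
              linarith
          have hBL : (L : ℝ) ≤ h (k + 1) := by
            by_cases hkq : k + 1 ≤ q
            · -- then k < q so log k = 0, L = 1
              have : Nat.log q k = 0 := Nat.log_eq_zero_iff.mpr (Or.inl (by omega))
              have hLe : L = 1 := by rw [hLk, this]
              rw [hLe]; norm_num; linarith
            · have hih := IH (k + 1) hkn (by omega)
              have hmono : Nat.log q k ≤ Nat.log q (k + 1) := Nat.log_mono_right (by omega)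
              have : (L : ℝ) ≤ (Nat.log q (k + 1) : ℝ) + 1 := by
                rw [hLk]; push_cast
                have : (Nat.log q k : ℝ) ≤ (Nat.log q (k + 1) : ℝ) := by exact_mod_cast hmono
                linarith
              linarith
          -- apply hh3
          have hdiv : (q * k) / q = k := Nat.mul_div_cancel_left k (by omega)
          have hrec := hh3 (q * k) hpq ⟨k, rfl⟩
          rw [hdiv] at hrec
          rw [hrec]
          set A := h (q * k)
          set B := h (k + 1)
          have hB0 : (0:ℝ) < B := by linarith
          have hform : A * (1 - 1 / B) = A * (B - 1) / B := by
            field_simp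
          have hLR : (1:ℝ) ≤ (L:ℝ) := by exact_mod_cast hL1
          have hqR : (3:ℝ) ≤ (q:ℝ) := by exact_mod_cast hq
          have hkey : (L:ℝ) * B ≤ A * (B - 1) := by
            nlinarith [mul_nonneg (by linarith : (0:ℝ) ≤ A - ((L:ℝ) + (q:ℝ) - 1))
                (by linarith : (0:ℝ) ≤ B - 1),
              mul_nonneg (by linarith : (0:ℝ) ≤ (q:ℝ) - 3)
                (by linarith : (0:ℝ) ≤ B - 1)]
          have hmain : (L:ℝ) ≤ A * (1 - 1 / B) := by
            rw [hform, le_div_iff₀ hB0]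
            linarith
          have hcastlog : (Nat.log q (q * k + 1) : ℝ) ≤ (L : ℝ) := by exact_mod_cast hlogn
          linarith
        · -- simple step
          have hrec := hh2 p hpq hdvd
          have hih := IH p (by omega) hp1
          rw [hrec]
          have : (Nat.log q (p + 1) : ℝ) ≤ (Nat.log q p : ℝ) + 1 := by
            exact_mod_cast hlogsucc
          linarith
  -- conclude
  intro n hn1
  have hmain := main n hn1
  have hqR : (1:ℝ) < (q:ℝ) := by exact_mod_cast hq1
  have hlogq : 0 < Real.log q := Real.log_pos hqR
  have hfl : ⌊Real.log n / Real.log q⌋ ≤ (Nat.log q n : ℤ) := by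
    rw [← Int.lt_add_one_iff, Int.floor_lt]
    rw [div_lt_iff₀ hlogq]
    push_cast
    have hpow : (n : ℝ) < ((q : ℝ)) ^ (Nat.log q n + 1) := by
      have := Nat.lt_pow_succ_log_self hq1 n
      exact_mod_cast this
    have hn0 : (0:ℝ) < (n:ℝ) := by exact_mod_cast hn1
    calc Real.log n < Real.log ((q:ℝ) ^ (Nat.log q n + 1)) := Real.log_lt_log hn0 hpow
      _ = (Nat.log q n + 1 : ℝ) * Real.log q := by
          rw [Real.log_pow]; push_cast; ring
  have : (⌊Real.log n / Real.log q⌋ : ℝ) ≤ (Nat.log q n : ℝ) := by exact_mod_cast hfl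
  linarith
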